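/- For every symmetric bilinear map B : X × X → Y between finite-dimensional real inner product spaces, the expected value of z ↦ ‖B(z,z)‖² under the standard Gaussian measure μ on X equals ‖Σ_i B(e_i,e_i)‖² + 2 Σ_{i,j} ‖B(e_i,e_j)‖², where (e_i) is any orthonormal basis of X (i.e. it equals the squared norm of the trace of B plus twice the squared Hilbert–Schmidt norm of B). -/

import Mathlib

open MeasureTheory Real RealInnerProductSpace

noncomputable def stdGaussian (X : Type*) [NormedAddCommGroup X] [InnerProductSpace ℝ X]
    [FiniteDimensional ℝ X] [MeasurableSpace X] [BorelSpace X] : Measure X :=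
  volume.withDensity fun z =>
    ENNReal.ofReal (Real.exp (-‖z‖ ^ 2 / 2) / (2 * Real.pi) ^ ((Module.finrank ℝ X : ℝ) / 2))

open scoped NNReal ENNReal

/-! ### Auxiliary lemmas: one-dimensional Gaussian moments -/

lemma gauss_raw_odd {e : ℕ} (he : Odd e) :
    ∫ x : ℝ, x ^ e * Real.exp (-x ^ 2 / 2) = 0 := by
  have h := integral_neg_eq_self (fun x : ℝ => x ^ e * Real.exp (-x ^ 2 / 2)) volume
  simp only [he.neg_pow, neg_sq, neg_mul] at h
  rw [integral_neg] at h
  linarith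

lemma gauss_raw_even (m : ℕ) :
    ∫ x : ℝ, x ^ (2 * m) * Real.exp (-x ^ 2 / 2)
      = 2 * ((1/2 : ℝ) ^ (-(((2 * m : ℕ) : ℝ) + 1) / 2) * (1 / 2)
          * Real.Gamma ((((2 * m : ℕ) : ℝ) + 1) / 2)) := by
  have heven : ∀ x : ℝ, |x| ^ (2*m) * Real.exp (-|x| ^ 2 / 2)
      = x ^ (2*m) * Real.exp (-x ^ 2 / 2) := by
    intro x
    rw [sq_abs, pow_mul, sq_abs, ← pow_mul]
  calc ∫ x : ℝ, x ^ (2*m) * Real.exp (-x ^ 2 / 2)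
      = ∫ x : ℝ, |x| ^ (2*m) * Real.exp (-|x| ^ 2 / 2) := by
        congr 1; funext x; rw [heven]
    _ = 2 * ∫ x in Set.Ioi (0:ℝ), x ^ (2*m) * Real.exp (-x ^ 2 / 2) := by
        rw [integral_comp_abs (f := fun x => x ^ (2*m) * Real.exp (-x ^ 2 / 2))]
    _ = 2 * ∫ x in Set.Ioi (0:ℝ), x ^ (((2*m : ℕ) : ℝ)) * Real.exp (-(1/2) * x ^ (2:ℝ)) := by
        congr 1
        refine setIntegral_congr_fun measurableSet_Ioi (fun x hx => ?_)
        rw [Real.rpow_natCast, Real.rpow_two]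
        ring_nf
    _ = _ := by
        rw [integral_rpow_mul_exp_neg_mul_rpow (by norm_num)
          (lt_of_lt_of_le neg_one_lt_zero (by positivity)) (by norm_num)]

lemma half_rpow_neg (a : ℝ) : (1/2 : ℝ) ^ (-a) = 2 ^ a := by
  rw [one_div, Real.inv_rpow (by norm_num : (0:ℝ) ≤ 2),
    Real.rpow_neg (by norm_num : (0:ℝ) ≤ 2), inv_inv]

lemma two_rpow_half : (2:ℝ) ^ ((1:ℝ)/2) = Real.sqrt 2 := (Real.sqrt_eq_rpow 2).symm

lemma gauss_raw_zero : ∫ x : ℝ, x ^ 0 * Real.exp (-x ^ 2 / 2) = Real.sqrt (2 * π) := by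
  have h := gauss_raw_even 0
  norm_num at h
  rw [half_rpow_neg, two_rpow_half,
    Real.Gamma_one_half_eq] at h
  rw [show ∫ x : ℝ, x ^ 0 * Real.exp (-x ^ 2 / 2) = ∫ x : ℝ, Real.exp (-x ^ 2 / 2) by norm_num,
    Real.sqrt_mul (by norm_num : (0:ℝ) ≤ 2)]
  rw [h]; ring

lemma Gamma_three_half : Real.Gamma (3/2) = Real.sqrt π / 2 := by
  rw [show (3/2 : ℝ) = 1/2 + 1 by norm_num, Real.Gamma_add_one (by norm_num),
    Real.Gamma_one_half_eq]
  ring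

lemma gauss_raw_two : ∫ x : ℝ, x ^ 2 * Real.exp (-x ^ 2 / 2) = Real.sqrt (2 * π) := by
  have h := gauss_raw_even 1
  norm_num at h
  rw [half_rpow_neg, Gamma_three_half,
    show ((3:ℝ)/2) = 1 + (1:ℝ)/2 by norm_num, Real.rpow_add (by norm_num : (0:ℝ) < 2),
    Real.rpow_one, two_rpow_half] at h
  rw [h, Real.sqrt_mul (by norm_num : (0:ℝ) ≤ 2)]
  ring

lemma Gamma_five_half : Real.Gamma (5/2) = 3 * Real.sqrt π / 4 := by
  rw [show (5/2 : ℝ) = 3/2 + 1 by norm_num, Real.Gamma_add_one (by norm_num), Gamma_three_half]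
  ring

lemma gauss_raw_four : ∫ x : ℝ, x ^ 4 * Real.exp (-x ^ 2 / 2) = 3 * Real.sqrt (2 * π) := by
  have h := gauss_raw_even 2
  norm_num at h
  rw [half_rpow_neg, Gamma_five_half,
    show ((5:ℝ)/2) = 2 + (1:ℝ)/2 by norm_num, Real.rpow_add (by norm_num : (0:ℝ) < 2),
    show ((2:ℝ) ^ (2:ℝ)) = 4 by
      rw [show ((2:ℝ) : ℝ) = ((2:ℕ):ℝ) from by norm_num, Real.rpow_natCast]; norm_num,
    two_rpow_half] at h
  rw [h, Real.sqrt_mul (by norm_num : (0:ℝ) ≤ 2)]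
  ring

/-- The normalized one-dimensional standard Gaussian density. -/
noncomputable def gaussD (t : ℝ) : ℝ := Real.exp (-t ^ 2 / 2) / Real.sqrt (2 * π)

/-- Moments of the standard Gaussian. -/
noncomputable def gmoment (e : ℕ) : ℝ := ∫ x : ℝ, x ^ e * gaussD x

lemma gmoment_eq (e : ℕ) :
    gmoment e = (∫ x : ℝ, x ^ e * Real.exp (-x ^ 2 / 2)) / Real.sqrt (2 * π) := by
  simp_rw [gmoment, gaussD, ← mul_div_assoc]
  rw [integral_div]

lemma sqrt_two_pi_pos : (0:ℝ) < Real.sqrt (2 * π) := by positivity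

lemma gmoment_zero : gmoment 0 = 1 := by
  rw [gmoment_eq, gauss_raw_zero, div_self sqrt_two_pi_pos.ne']

lemma gmoment_one : gmoment 1 = 0 := by
  rw [gmoment_eq, gauss_raw_odd ⟨0, by norm_num⟩, zero_div]

lemma gmoment_two : gmoment 2 = 1 := by
  rw [gmoment_eq, gauss_raw_two, div_self sqrt_two_pi_pos.ne']

lemma gmoment_three : gmoment 3 = 0 := by
  rw [gmoment_eq, gauss_raw_odd ⟨1, by norm_num⟩, zero_div]

lemma gmoment_four : gmoment 4 = 3 := by
  rw [gmoment_eq, gauss_raw_four]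
  field_simp

lemma integrable_pow_gaussD (e : ℕ) :
    Integrable (fun x : ℝ => x ^ e * gaussD x) := by
  have h : Integrable (fun x : ℝ => x ^ ((e : ℕ) : ℝ) * Real.exp (-(1/2) * x ^ 2)) :=
    integrable_rpow_mul_exp_neg_mul_sq (by norm_num)
      (lt_of_lt_of_le neg_one_lt_zero (by positivity))
  have h2 : Integrable (fun x : ℝ => x ^ e * Real.exp (-x ^ 2 / 2)) := by
    have : (fun x : ℝ => x ^ ((e : ℕ) : ℝ) * Real.exp (-(1/2) * x ^ 2))
        = fun x : ℝ => x ^ e * Real.exp (-x ^ 2 / 2) := by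
      funext x; rw [Real.rpow_natCast]; ring_nf
    rwa [this] at h
  simpa [gaussD, ← mul_div_assoc] using h2.div_const (Real.sqrt (2 * π))

/-! ### The combinatorial fourth-moment identity -/

lemma prod_moment_eq {I : Type*} [Fintype I] [DecidableEq I] {M : ℕ → ℝ}
    (hM0 : M 0 = 1) (hM1 : M 1 = 0) (hM2 : M 2 = 1) (hM4 : M 4 = 3)
    (i j k l : I) :
    (∏ m, M ((if i = m then 1 else 0) + (if j = m then 1 else 0) +
        (if k = m then 1 else 0) + (if l = m then 1 else 0)))
      = (if i = j then (1:ℝ) else 0) * (if k = l then 1 else 0)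
        + (if i = k then 1 else 0) * (if j = l then 1 else 0)
        + (if i = l then 1 else 0) * (if j = k then 1 else 0) := by
  by_cases hij : i = j
  · subst hij
    by_cases hik : i = k
    · subst hik
      by_cases hil : i = l
      · subst hil
        refine Eq.trans (Finset.prod_eq_single i
          (fun m _ hmi => by simp [Ne.symm hmi, hM0])
          (fun h => absurd (Finset.mem_univ i) h)) (by simp [hM4]; norm_num)
      · refine Eq.trans (Finset.prod_eq_zero (Finset.mem_univ l) ?_) (by simp [hil])
        simp [hil, hM1]
    · by_cases hil : i = l
      · subst hil
        refine Eq.trans (Finset.prod_eq_zero (Finset.mem_univ k) ?_)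
          (by simp [hik, Ne.symm hik])
        simp [hik, hM1]
      · by_cases hkl : k = l
        · subst hkl
          refine Eq.trans (Finset.prod_eq_one fun m _ => ?_) (by simp [hik])
          by_cases hmi : i = m
          · subst hmi; simp [hik, Ne.symm hik, hM2]
          · by_cases hmk : k = m
            · subst hmk; simp [hik, hM2]
            · simp [hmi, hmk, hM0]
        · refine Eq.trans (Finset.prod_eq_zero (Finset.mem_univ k) ?_)
            (by simp [hik, hil, hkl])
          simp [hik, Ne.symm hkl, hM1]
  · by_cases hik : i = k
    · subst hik
      by_cases hjl : j = l
      · subst hjl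
        refine Eq.trans (Finset.prod_eq_one fun m _ => ?_)
          (by simp [hij, Ne.symm hij])
        by_cases hmi : i = m
        · subst hmi; simp [Ne.symm hij, hM2]
        · by_cases hmj : j = m
          · subst hmj; simp [hij, hM2]
          · simp [hmi, hmj, hM0]
      · refine Eq.trans (Finset.prod_eq_zero (Finset.mem_univ j) ?_)
          (by simp [hij, Ne.symm hij, hjl])
        simp [hij, Ne.symm hij, Ne.symm hjl, hM1]
    · by_cases hil : i = l
      · subst hil
        by_cases hjk : j = k
        · subst hjk
          refine Eq.trans (Finset.prod_eq_one fun m _ => ?_)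
            (by simp [hij, Ne.symm hij])
          by_cases hmi : i = m
          · subst hmi; simp [Ne.symm hij, hM2]
          · by_cases hmj : j = m
            · subst hmj; simp [hij, hM2]
            · simp [hmi, hmj, hM0]
        · refine Eq.trans (Finset.prod_eq_zero (Finset.mem_univ j) ?_)
            (by simp [hij, hik, hjk])
          simp [hij, Ne.symm hij, Ne.symm hjk, hM1]
      · refine Eq.trans (Finset.prod_eq_zero (Finset.mem_univ i) ?_)
          (by simp [hij, hik, hil])
        simp [Ne.symm hij, Ne.symm hik, Ne.symm hil, hM1]

/-- The monomial `x i * x j * (x k * x l)` as a product over all coordinates. -/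
lemma monomial_eq_prod {I : Type*} [Fintype I] [DecidableEq I] (x : I → ℝ) (i j k l : I) :
    x i * x j * (x k * x l)
      = ∏ m, x m ^ ((if i = m then 1 else 0) + (if j = m then 1 else 0) +
          (if k = m then 1 else 0) + (if l = m then 1 else 0)) := by
  simp only [pow_add, Finset.prod_mul_distrib, pow_ite, pow_one, pow_zero,
    Finset.prod_ite_eq, Finset.mem_univ, if_true]
  ring

/-! ### The main theorem -/

/-- For a symmetric bilinear map `B`, the Gaussian expectation of `z ↦ ‖B(z,z)‖²` equals
the squared norm of the trace of `B` plus twice the squared Hilbert–Schmidt norm of `B`. -/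
theorem gaussian_integral_sq_norm_symm_bilinear
    {X : Type*} [NormedAddCommGroup X] [InnerProductSpace ℝ X] [FiniteDimensional ℝ X]
    [MeasurableSpace X] [BorelSpace X]
    {Y : Type*} [NormedAddCommGroup Y] [InnerProductSpace ℝ Y] [FiniteDimensional ℝ Y]
    {I : Type*} [Fintype I] (b : OrthonormalBasis I ℝ X)
    (B : X →ₗ[ℝ] X →ₗ[ℝ] Y) (hB : ∀ x y : X, B x y = B y x) :
    ∫ z, ‖B z z‖ ^ 2 ∂(stdGaussian X)
      = ‖∑ i, B (b i) (b i)‖ ^ 2 + 2 * ∑ i, ∑ j, ‖B (b i) (b j)‖ ^ 2 := by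
  classical
  set dens : X → ℝ := fun z =>
      Real.exp (-‖z‖ ^ 2 / 2) / (2 * Real.pi) ^ ((Module.finrank ℝ X : ℝ) / 2) with hdens_def
  have hdens_nonneg : ∀ z, 0 ≤ dens z := fun z => by positivity
  have hdens_cont : Continuous dens :=
    (((continuous_norm.pow 2).neg.div_const 2).rexp).div_const _
  have hdens_meas : Measurable fun z => Real.toNNReal (dens z) :=
    hdens_cont.measurable.real_toNNReal
  have hsg : stdGaussian X
      = volume.withDensity fun z => ((Real.toNNReal (dens z) : ℝ≥0) : ℝ≥0∞) := rfl
  rw [hsg, integral_withDensity_eq_integral_smul hdens_meas]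
  have hpt : ∀ z : X, (Real.toNNReal (dens z)) • (‖B z z‖ ^ 2)
      = dens z * ‖B z z‖ ^ 2 := fun z => by
    rw [NNReal.smul_def, smul_eq_mul, Real.coe_toNNReal _ (hdens_nonneg z)]
  simp only [hpt]
  -- change of variables
  let φ : (I → ℝ) ≃ᵐ X := (b.measurableEquiv.trans (MeasurableEquiv.toLp 2 (I → ℝ)).symm).symm
  have hφ : MeasurePreserving φ volume volume :=
    (MeasurePreserving.symm _ b.measurePreserving_measurableEquiv).comp
      (MeasurePreserving.symm _ (EuclideanSpace.volume_preserving_symm_measurableEquiv_toLp I))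
  rw [← hφ.integral_comp' (fun z => dens z * ‖B z z‖ ^ 2)]
  have hφx : ∀ x : I → ℝ, φ x = ∑ i, x i • b i := fun x => (b.sum_repr_symm (WithLp.toLp 2 x)).symm
  have hφnorm : ∀ x : I → ℝ, ‖φ x‖ ^ 2 = ∑ i, (x i) ^ 2 := by
    intro x
    have h1 : ‖φ x‖ = ‖(MeasurableEquiv.toLp 2 (I → ℝ)) x‖ :=
      b.repr.symm.norm_map _
    rw [h1, EuclideanSpace.norm_eq, Real.sq_sqrt (by positivity)]
    simp only [Real.norm_eq_abs, sq_abs]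
    exact Finset.sum_congr rfl fun i _ => rfl
  have hcard : (Module.finrank ℝ X : ℝ) = (Fintype.card I : ℝ) := by
    exact_mod_cast congrArg Nat.cast (Module.finrank_eq_card_basis b.toBasis)
  have hdensφ : ∀ x : I → ℝ, dens (φ x) = ∏ m, gaussD (x m) := by
    intro x
    have hsum : (-‖φ x‖ ^ 2 / 2) = ∑ i, (-(x i ^ 2) / 2) := by
      rw [hφnorm x, ← Finset.sum_neg_distrib, Finset.sum_div]
    have hden2 : ((2 * π) ^ ((Module.finrank ℝ X : ℝ) / 2) : ℝ)
        = ∏ _m : I, Real.sqrt (2 * π) := by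
      rw [Finset.prod_const, Finset.card_univ,
        ← Real.rpow_natCast (Real.sqrt (2 * π)) (Fintype.card I),
        Real.sqrt_eq_rpow, ← Real.rpow_mul (by positivity), hcard,
        show 1 / 2 * (Fintype.card I : ℝ) = (Fintype.card I : ℝ) / 2 by ring]
    show Real.exp (-‖φ x‖ ^ 2 / 2) / (2 * π) ^ ((Module.finrank ℝ X : ℝ) / 2) = _
    rw [hsum, Real.exp_sum, hden2, ← Finset.prod_div_distrib]
    rfl
  -- expansion of the integrand
  have hexpand : ∀ x : I → ℝ, dens (φ x) * ‖B (φ x) (φ x)‖ ^ 2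
      = ∑ p : (I × I) × I × I,
          (∏ m, x m ^ ((if p.1.1 = m then 1 else 0) + (if p.1.2 = m then 1 else 0) +
              (if p.2.1 = m then 1 else 0) + (if p.2.2 = m then 1 else 0)) * gaussD (x m))
            * ⟪B (b p.1.1) (b p.1.2), B (b p.2.1) (b p.2.2)⟫ := by
    intro x
    rw [hdensφ x, ← real_inner_self_eq_norm_sq, hφx x]
    have hdbl : B (∑ i, x i • b i) (∑ i, x i • b i)
        = ∑ i, ∑ j, (x i * x j) • B (b i) (b j) := by
      simp only [map_sum, _root_.map_smul, LinearMap.sum_apply, LinearMap.smul_apply,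
        Finset.smul_sum, smul_smul]
      rw [Finset.sum_comm]
      exact Finset.sum_congr rfl fun i _ => Finset.sum_congr rfl fun j _ => by
        rw [mul_comm]
    rw [hdbl]
    simp only [sum_inner, inner_sum, real_inner_smul_left, real_inner_smul_right,
      Fintype.sum_prod_type, Finset.mul_sum]
    refine Finset.sum_congr rfl fun i _ => Finset.sum_congr rfl fun j _ =>
      Finset.sum_congr rfl fun k _ => Finset.sum_congr rfl fun l _ => ?_
    rw [Finset.prod_mul_distrib, ← monomial_eq_prod x i j k l]
    first
      | ring1
      | (rw [real_inner_comm ((B (b k)) (b l)) ((B (b i)) (b j))]; ring1)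
  calc ∫ x : I → ℝ, dens (φ x) * ‖B (φ x) (φ x)‖ ^ 2
      = ∫ x : I → ℝ, ∑ p : (I × I) × I × I,
          (∏ m, x m ^ ((if p.1.1 = m then 1 else 0) + (if p.1.2 = m then 1 else 0) +
              (if p.2.1 = m then 1 else 0) + (if p.2.2 = m then 1 else 0)) * gaussD (x m))
            * ⟪B (b p.1.1) (b p.1.2), B (b p.2.1) (b p.2.2)⟫ := by
        simp only [hexpand]
    _ = ∑ p : (I × I) × I × I,
          ∫ x : I → ℝ, (∏ m, x m ^ ((if p.1.1 = m then 1 else 0) + (if p.1.2 = m then 1 else 0) +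
              (if p.2.1 = m then 1 else 0) + (if p.2.2 = m then 1 else 0)) * gaussD (x m))
            * ⟪B (b p.1.1) (b p.1.2), B (b p.2.1) (b p.2.2)⟫ := by
        refine integral_finset_sum _ fun p _ => ?_
        exact (Integrable.fintype_prod
          (f := fun m t => t ^ ((if p.1.1 = m then 1 else 0) + (if p.1.2 = m then 1 else 0) +
            (if p.2.1 = m then 1 else 0) + (if p.2.2 = m then 1 else 0)) * gaussD t)
          (fun m => integrable_pow_gaussD _)).mul_const _
    _ = ∑ p : (I × I) × I × I,
          (∏ m, gmoment ((if p.1.1 = m then 1 else 0) + (if p.1.2 = m then 1 else 0) +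
              (if p.2.1 = m then 1 else 0) + (if p.2.2 = m then 1 else 0)))
            * ⟪B (b p.1.1) (b p.1.2), B (b p.2.1) (b p.2.2)⟫ := by
        refine Finset.sum_congr rfl fun p _ => ?_
        rw [integral_mul_const,
          integral_fintype_prod_volume_eq_prod
            (fun m t => t ^ ((if p.1.1 = m then 1 else 0) + (if p.1.2 = m then 1 else 0) +
              (if p.2.1 = m then 1 else 0) + (if p.2.2 = m then 1 else 0)) * gaussD t)]
        rfl
    _ = ∑ p : (I × I) × I × I,
          ((if p.1.1 = p.1.2 then (1:ℝ) else 0) * (if p.2.1 = p.2.2 then 1 else 0)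
            + (if p.1.1 = p.2.1 then 1 else 0) * (if p.1.2 = p.2.2 then 1 else 0)
            + (if p.1.1 = p.2.2 then 1 else 0) * (if p.1.2 = p.2.1 then 1 else 0))
            * ⟪B (b p.1.1) (b p.1.2), B (b p.2.1) (b p.2.2)⟫ := by
        refine Finset.sum_congr rfl fun p _ => ?_
        rw [prod_moment_eq gmoment_zero gmoment_one gmoment_two gmoment_four]
    _ = ‖∑ i, B (b i) (b i)‖ ^ 2 + 2 * ∑ i, ∑ j, ‖B (b i) (b j)‖ ^ 2 := by
        simp only [Fintype.sum_prod_type]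
        simp only [add_mul, Finset.sum_add_distrib, mul_assoc, ite_mul, one_mul, zero_mul,
          Finset.sum_ite_irrel, Finset.sum_const_zero,
          Finset.sum_ite_eq, Finset.sum_ite_eq', Finset.mem_univ, if_true]
        rw [← real_inner_self_eq_norm_sq, sum_inner]
        simp_rw [inner_sum, ← real_inner_self_eq_norm_sq]
        have hsym : ∀ i j : I, ⟪B (b i) (b j), B (b j) (b i)⟫
            = ⟪B (b i) (b j), B (b i) (b j)⟫ := fun i j => by rw [hB (b j) (b i)]
        simp_rw [hsym]
        ring
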